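/- Let A(x) := Σ_{n≥0} (−1)^n · p^{n²}·y^{2n}/(p;p)_n · x^n ∈ ℚ(p,y)[[x]] and B(x) := A(x) − p·x·y·A(p·x). For a Dyck word μ of size m, let ret(μ) be the number of nonempty prefixes of μ with equal numbers of U's and D's (the number of prime Dyck factors of μ), and let Area(μ) := Σ_{i=1}^{m}(i − 1 − d_i(μ)) with d_i(μ) the number of D's preceding the i-th U. Then B(x) · Σ_{n≥0} (p·x·y)^n · ( Σ_{μ Dyck word of size n+1} p^{ret(μ) + Area(μ) − (n+1)} · y^{(n+1) − ret(μ)} ) = A(p·x); that is, A(p·x)/B(x) equals the generating function Σ_{n≥0} (pxy)^n Σ_{μ ∈ D_{n+1}} p^{D(μ)} y^{n+1−ret(μ)} with D(μ) = ret(μ) + Area(μ) − (n+1). -/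

import Mathlib

attribute [local instance] Classical.propDecidable

/-- The field `ℚ(p,y)`, realized as rational functions in `y` over `ℚ(p)`. -/
abbrev K2 : Type := RatFunc (RatFunc ℚ)

/-- The variable `p` of `ℚ(p,y)`. -/
noncomputable def pv : K2 := RatFunc.C RatFunc.X

/-- The variable `y` of `ℚ(p,y)`. -/
noncomputable def yv : K2 := RatFunc.X

/-- `A(x) = Σ_{n≥0} (-1)^n p^{n²} y^{2n} / (p;p)_n · x^n ∈ ℚ(p,y)[[x]]`. -/
noncomputable def Aser : PowerSeries K2 :=
  PowerSeries.mk fun n =>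
    (-1 : K2) ^ n * pv ^ (n ^ 2) * yv ^ (2 * n) /
      ∏ i ∈ Finset.range n, (1 - pv ^ (i + 1))

/-- `B(x) = A(x) - p·x·y·A(p·x)`. -/
noncomputable def Bser : PowerSeries K2 :=
  Aser - PowerSeries.C (R := K2) (pv * yv) * PowerSeries.X * PowerSeries.rescale pv Aser

/-- A word `w` (with `true = U`, `false = D`) satisfies the ballot condition: every
prefix contains at least as many `U`'s as `D`'s. -/
def prefixCond (L : ℕ) (w : Fin L → Bool) : Prop :=
  ∀ m ∈ Finset.range (L + 1),
    (Finset.univ.filter (fun j : Fin L => (j : ℕ) < m ∧ w j = false)).card ≤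
      (Finset.univ.filter (fun j : Fin L => (j : ℕ) < m ∧ w j = true)).card

/-- A Dyck word of size `m`: a word of length `2m` with exactly `m` `U`'s such that
every prefix has at least as many `U`'s as `D`'s. -/
def isDyck (m : ℕ) (w : Fin (2 * m) → Bool) : Prop :=
  (Finset.univ.filter (fun j => w j = true)).card = m ∧ prefixCond (2 * m) w

/-- `d_i(w)`, the number of `D`'s preceding the `i`-th `U` in `w` (1-indexed `i`). -/
def dCount (m : ℕ) (w : Fin (2 * m) → Bool) (i : ℕ) : ℕ :=
  (Finset.univ.filter (fun j : Fin (2 * m) => w j = false ∧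
    (Finset.univ.filter
      (fun j' : Fin (2 * m) => (j' : ℕ) < (j : ℕ) ∧ w j' = true)).card < i)).card

/-- `Area(w) = Σ_{i=1}^{m} (i - 1 - d_i(w))`. -/
def area (m : ℕ) (w : Fin (2 * m) → Bool) : ℕ :=
  ∑ i ∈ Finset.Icc 1 m, (i - 1 - dCount m w i)

/-- `ret(w)`, the number of nonempty prefixes of `w` with equal numbers of `U`'s and
`D`'s (the number of prime Dyck factors of `w`). -/
def retCount (m : ℕ) (w : Fin (2 * m) → Bool) : ℕ :=
  ((Finset.Icc 1 (2 * m)).filter (fun l =>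
    (Finset.univ.filter (fun j : Fin (2 * m) => (j : ℕ) < l ∧ w j = true)).card =
      (Finset.univ.filter (fun j : Fin (2 * m) => (j : ℕ) < l ∧ w j = false)).card)).card

/-- `Σ_{μ ∈ D_{n+1}} p^{ret(μ) + Area(μ) - (n+1)} · y^{(n+1) - ret(μ)}`
(integer exponents). -/
noncomputable def Dcoeff (n : ℕ) : K2 :=
  ∑ w ∈ Finset.univ.filter (fun w : Fin (2 * (n + 1)) → Bool => isDyck (n + 1) w),
    pv ^ ((retCount (n + 1) w + area (n + 1) w : ℤ) - (n + 1)) *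
      yv ^ (((n : ℤ) + 1) - retCount (n + 1) w)

open Finset

/-! ### Counting infrastructure on `ℕ → Bool` words -/

/-- Extend a `Fin L → Bool` word to `ℕ → Bool` by `false`. -/
def extW {L : ℕ} (w : Fin L → Bool) : ℕ → Bool :=
  fun j => if h : j < L then w ⟨j, h⟩ else false

/-- Number of letters `b` among the first `n` letters. -/
def cnt (v : ℕ → Bool) (b : Bool) (n : ℕ) : ℕ :=
  ((Finset.range n).filter (fun j => v j = b)).card

lemma cnt_zero (v : ℕ → Bool) (b : Bool) : cnt v b 0 = 0 := by
  simp [cnt]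

lemma cnt_succ (v : ℕ → Bool) (b : Bool) (n : ℕ) :
    cnt v b (n + 1) = cnt v b n + if v n = b then 1 else 0 := by
  unfold cnt
  rw [Finset.range_add_one, Finset.filter_insert]
  split <;> simp [Finset.card_insert_of_notMem]

lemma cnt_le (v : ℕ → Bool) (b : Bool) (n : ℕ) : cnt v b n ≤ n := by
  calc cnt v b n ≤ (Finset.range n).card := Finset.card_filter_le _ _
  _ = n := Finset.card_range n

lemma cnt_mono (v : ℕ → Bool) (b : Bool) {n n' : ℕ} (h : n ≤ n') :
    cnt v b n ≤ cnt v b n' := by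
  apply Finset.card_le_card
  apply Finset.filter_subset_filter
  exact Finset.range_subset_range.2 h

lemma cnt_true_add_false (v : ℕ → Bool) (n : ℕ) :
    cnt v true n + cnt v false n = n := by
  induction n with
  | zero => simp [cnt]
  | succ n ih =>
    rw [cnt_succ, cnt_succ]
    cases h : v n <;> simp <;> omega

lemma cnt_congr {v v' : ℕ → Bool} (b : Bool) {n : ℕ} (h : ∀ j < n, v j = v' j) :
    cnt v b n = cnt v' b n := by
  unfold cnt
  congr 1
  apply Finset.filter_congr
  intro j hj
  rw [Finset.mem_range] at hj
  rw [h j hj]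

lemma cnt_add (v : ℕ → Bool) (b : Bool) (s t : ℕ) :
    cnt v b (s + t) = cnt v b s + cnt (fun j => v (s + j)) b t := by
  induction t with
  | zero => simp [cnt_zero]
  | succ t ih => rw [← Nat.add_assoc, cnt_succ, cnt_succ, ih, Nat.add_assoc]

/-- The bridge lemma from `Fin`-filter cards to `cnt`. -/
lemma cnt_bridge {L : ℕ} (w : Fin L → Bool) (b : Bool) {n : ℕ} (hn : n ≤ L) :
    (Finset.univ.filter (fun j : Fin L => (j : ℕ) < n ∧ w j = b)).card
      = cnt (extW w) b n := by
  unfold cnt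
  apply Finset.card_bij (fun (j : Fin L) _ => (j : ℕ))
  · intro j hj
    simp only [Finset.mem_filter, Finset.mem_univ, true_and] at hj
    simp only [Finset.mem_filter, Finset.mem_range]
    refine ⟨hj.1, ?_⟩
    unfold extW
    rw [dif_pos j.isLt]
    simpa using hj.2
  · intro j₁ _ j₂ _ h
    exact Fin.val_injective h
  · intro j hj
    simp only [Finset.mem_filter, Finset.mem_range] at hj
    have hjL : j < L := lt_of_lt_of_le hj.1 hn
    refine ⟨⟨j, hjL⟩, ?_, rfl⟩
    simp only [Finset.mem_filter, Finset.mem_univ, true_and]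
    refine ⟨hj.1, ?_⟩
    have := hj.2
    unfold extW at this
    rwa [dif_pos hjL] at this

/-- `isDyck` in `cnt`-language. -/
lemma isDyck_iff (m : ℕ) (w : Fin (2 * m) → Bool) :
    isDyck m w ↔ (cnt (extW w) true (2 * m) = m ∧
      ∀ l ≤ 2 * m, cnt (extW w) false l ≤ cnt (extW w) true l) := by
  unfold isDyck prefixCond
  have key : (Finset.univ.filter (fun j : Fin (2*m) => w j = true)).card
      = cnt (extW w) true (2 * m) := by
    rw [← cnt_bridge w true (le_refl (2*m))]
    congr 1
    apply Finset.filter_congr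
    intro j _
    simp [j.isLt]
  constructor
  · rintro ⟨h1, h2⟩
    constructor
    · rw [← key]; exact h1
    · intro l hl
      have := h2 l (by rw [Finset.mem_range]; omega)
      rwa [cnt_bridge w false hl, cnt_bridge w true hl] at this
  · rintro ⟨h1, h2⟩
    constructor
    · rw [key]; exact h1
    · intro l hl
      rw [Finset.mem_range] at hl
      have hl' : l ≤ 2 * m := by omega
      rw [cnt_bridge w false hl', cnt_bridge w true hl']
      exact h2 l hl'

/-! ### Statistics in `cnt` language -/

/-- `np v n`: number of pairs (U,D) with the U strictly before the D among first `n`. -/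
def np (v : ℕ → Bool) (n : ℕ) : ℕ :=
  ∑ j ∈ Finset.range n, if v j = false then cnt v true j else 0

lemma retCount_eq (m : ℕ) (w : Fin (2 * m) → Bool) :
    retCount m w = ((Finset.Icc 1 (2 * m)).filter (fun l =>
      cnt (extW w) true l = cnt (extW w) false l)).card := by
  unfold retCount
  congr 1
  apply Finset.filter_congr
  intro l hl
  rw [Finset.mem_Icc] at hl
  rw [cnt_bridge w true hl.2, cnt_bridge w false hl.2]

lemma dCount_eq (m : ℕ) (w : Fin (2 * m) → Bool) (i : ℕ) :
    dCount m w i = ((Finset.range (2 * m)).filter (fun j =>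
      extW w j = false ∧ cnt (extW w) true j < i)).card := by
  unfold dCount
  apply Finset.card_bij (fun (j : Fin (2 * m)) _ => (j : ℕ))
  · intro j hj
    simp only [Finset.mem_filter, Finset.mem_univ, true_and] at hj
    simp only [Finset.mem_filter, Finset.mem_range]
    refine ⟨j.isLt, ?_, ?_⟩
    · unfold extW; rw [dif_pos j.isLt]; exact hj.1
    · rw [← cnt_bridge w true (le_of_lt j.isLt)]
      exact hj.2
  · intro j₁ _ j₂ _ h
    exact Fin.val_injective h
  · intro j hj
    simp only [Finset.mem_filter, Finset.mem_range] at hj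
    refine ⟨⟨j, hj.1⟩, ?_, rfl⟩
    simp only [Finset.mem_filter, Finset.mem_univ, true_and]
    constructor
    · have := hj.2.1; unfold extW at this; rwa [dif_pos hj.1] at this
    · rw [cnt_bridge w true (le_of_lt hj.1)]
      exact hj.2.2

def tri (m : ℕ) : ℕ := ∑ i ∈ Finset.range m, i

lemma two_tri (m : ℕ) : 2 * tri m = m * (m - 1) := by
  unfold tri
  rw [mul_comm]
  exact Finset.sum_range_id_mul_two m

lemma dCount_le {m : ℕ} {w : Fin (2 * m) → Bool} (hD : isDyck m w)
    {i : ℕ} (hi1 : 1 ≤ i) : dCount m w i ≤ i - 1 := by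
  obtain ⟨hcnt, hpre⟩ := (isDyck_iff m w).1 hD
  set v := extW w with hv
  rw [dCount_eq]
  have key : ∀ j ∈ (Finset.range (2 * m)).filter
      (fun j => v j = false ∧ cnt v true j < i), cnt v false j < i - 1 := by
    intro j hj
    simp only [Finset.mem_filter, Finset.mem_range] at hj
    have h1 : cnt v false (j + 1) = cnt v false j + 1 := by
      rw [cnt_succ, hj.2.1]; simp
    have h2 : cnt v true (j + 1) = cnt v true j := by
      rw [cnt_succ, hj.2.1]; simp
    have h3 : cnt v false (j + 1) ≤ cnt v true (j + 1) := hpre _ (by omega)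
    omega
  calc ((Finset.range (2 * m)).filter
      (fun j => v j = false ∧ cnt v true j < i)).card
      ≤ (Finset.range (i - 1)).card := by
        apply Finset.card_le_card_of_injOn (fun j => cnt v false j)
        · intro j hj
          rw [Finset.mem_coe, Finset.mem_range]
          exact key j hj
        · intro j₁ h₁ j₂ h₂ heq
          have heq' : cnt v false j₁ = cnt v false j₂ := heq
          by_contra hne
          rcases Nat.lt_or_ge j₁ j₂ with h | h
          · simp only [Finset.coe_filter, Set.mem_setOf_eq, Finset.mem_range] at h₁
            have : cnt v false (j₁ + 1) = cnt v false j₁ + 1 := by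
              simp [cnt_succ, h₁.2.1]
            have : cnt v false (j₁ + 1) ≤ cnt v false j₂ := cnt_mono v false h
            omega
          · have h' : j₂ < j₁ := by omega
            simp only [Finset.coe_filter, Set.mem_setOf_eq, Finset.mem_range] at h₂
            have : cnt v false (j₂ + 1) = cnt v false j₂ + 1 := by
              simp [cnt_succ, h₂.2.1]
            have : cnt v false (j₂ + 1) ≤ cnt v false j₁ := cnt_mono v false h'
            omega
    _ = i - 1 := Finset.card_range _

lemma sum_dCount {m : ℕ} {w : Fin (2 * m) → Bool} (hD : isDyck m w) :
    (∑ i ∈ Finset.Icc 1 m, dCount m w i) + np (extW w) (2 * m) = m * m := by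
  obtain ⟨hcnt, hpre⟩ := (isDyck_iff m w).1 hD
  set v := extW w with hv
  have hfalse : cnt v false (2 * m) = m := by
    have := cnt_true_add_false v (2 * m)
    omega
  have hu_le : ∀ j < 2 * m, cnt v true j ≤ m := by
    intro j hj
    calc cnt v true j ≤ cnt v true (2 * m) := cnt_mono v true (le_of_lt hj)
    _ = m := hcnt
  have step1 : ∑ i ∈ Finset.Icc 1 m, dCount m w i
      = ∑ j ∈ Finset.range (2 * m), (if v j = false then m - cnt v true j else 0) := by
    calc ∑ i ∈ Finset.Icc 1 m, dCount m w i
        = ∑ i ∈ Finset.Icc 1 m, ∑ j ∈ Finset.range (2 * m),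
            (if v j = false ∧ cnt v true j < i then 1 else 0) := by
          apply Finset.sum_congr rfl
          intro i _
          rw [dCount_eq, Finset.card_filter]
      _ = ∑ j ∈ Finset.range (2 * m), ∑ i ∈ Finset.Icc 1 m,
            (if v j = false ∧ cnt v true j < i then 1 else 0) := Finset.sum_comm
      _ = ∑ j ∈ Finset.range (2 * m), (if v j = false then m - cnt v true j else 0) := by
          apply Finset.sum_congr rfl
          intro j hj
          rw [Finset.mem_range] at hj
          by_cases hvj : v j = false
          · simp only [hvj, true_and, if_true]
            have : ∑ i ∈ Finset.Icc 1 m, (if cnt v true j < i then 1 else 0)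
                = ((Finset.Icc 1 m).filter (fun i => cnt v true j < i)).card := by
              rw [Finset.card_filter]
            rw [this]
            have : (Finset.Icc 1 m).filter (fun i => cnt v true j < i)
                = Finset.Icc (cnt v true j + 1) m := by
              ext i
              simp only [Finset.mem_filter, Finset.mem_Icc]
              omega
            rw [this, Nat.card_Icc]
            omega
          · simp [hvj]
  rw [step1]
  unfold np
  rw [← Finset.sum_add_distrib]
  have : ∑ j ∈ Finset.range (2 * m),
      ((if v j = false then m - cnt v true j else 0) + (if v j = false then cnt v true j else 0))
      = ∑ j ∈ Finset.range (2 * m), (if v j = false then m else 0) := by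
    apply Finset.sum_congr rfl
    intro j hj
    rw [Finset.mem_range] at hj
    by_cases hvj : v j = false
    · simp only [hvj, if_true]
      have := hu_le j hj
      omega
    · simp [hvj]
  rw [this]
  have h4 : (∑ j ∈ Finset.range (2*m), if v j = false then m else 0)
      = m * ((Finset.range (2*m)).filter (fun j => v j = false)).card := by
    rw [Finset.card_filter, Finset.mul_sum]
    apply Finset.sum_congr rfl
    intro j _
    split_ifs <;> simp
  rw [h4]
  have h5 : ((Finset.range (2*m)).filter (fun j => v j = false)).card = m := hfalse
  rw [h5]

lemma area_np {m : ℕ} {w : Fin (2 * m) → Bool} (hD : isDyck m w) :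
    area m w + m * m = tri m + np (extW w) (2 * m) := by
  have h1 : area m w + ∑ i ∈ Finset.Icc 1 m, dCount m w i
      = ∑ i ∈ Finset.Icc 1 m, (i - 1) := by
    unfold area
    rw [← Finset.sum_add_distrib]
    apply Finset.sum_congr rfl
    intro i hi
    rw [Finset.mem_Icc] at hi
    have := dCount_le hD hi.1
    omega
  have h2 : ∑ i ∈ Finset.Icc 1 m, (i - 1) = tri m := by
    unfold tri
    rw [Finset.range_eq_Ico]
    rw [Finset.sum_Ico_eq_sum_range]
    simp only [Nat.sub_zero]
    rw [show Finset.Icc 1 m = Finset.Ico 1 (m+1) by rfl]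
    rw [Finset.sum_Ico_eq_sum_range]
    simp
  have h3 := sum_dCount hD
  omega

/-! ### The combination word `U w₁ D w₂` -/

def comb (m₁ : ℕ) (v₁ v₂ : ℕ → Bool) : ℕ → Bool :=
  fun j => if j = 0 then true else if j ≤ 2*m₁ then v₁ (j-1)
    else if j = 2*m₁+1 then false else v₂ (j - (2*m₁+2))

lemma comb_zero (m₁ : ℕ) (v₁ v₂ : ℕ → Bool) : comb m₁ v₁ v₂ 0 = true := by
  unfold comb; simp

lemma comb_in₁ (m₁ : ℕ) (v₁ v₂ : ℕ → Bool) {t : ℕ} (ht : t < 2*m₁) :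
    comb m₁ v₁ v₂ (t+1) = v₁ t := by
  unfold comb
  rw [if_neg (by omega), if_pos (by omega)]
  congr 1

lemma comb_mid (m₁ : ℕ) (v₁ v₂ : ℕ → Bool) : comb m₁ v₁ v₂ (2*m₁+1) = false := by
  unfold comb
  rw [if_neg (by omega), if_neg (by omega), if_pos rfl]

lemma comb_in₂ (m₁ : ℕ) (v₁ v₂ : ℕ → Bool) (t : ℕ) :
    comb m₁ v₁ v₂ (2*m₁+2+t) = v₂ t := by
  unfold comb
  rw [if_neg (by omega), if_neg (by omega), if_neg (by omega)]
  congr 1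
  omega

lemma cnt_comb_low (m₁ : ℕ) (v₁ v₂ : ℕ → Bool) (b : Bool) {t : ℕ} (ht : t ≤ 2*m₁) :
    cnt (comb m₁ v₁ v₂) b (t+1) = (if true = b then 1 else 0) + cnt v₁ b t := by
  induction t with
  | zero =>
    rw [show (0:ℕ)+1 = 0+1 from rfl, cnt_succ, cnt_zero, cnt_zero, comb_zero]
    omega
  | succ t ih =>
    rw [cnt_succ, ih (by omega), comb_in₁ m₁ v₁ v₂ (by omega), cnt_succ]
    ring

lemma cnt_comb_mid (m₁ : ℕ) (v₁ v₂ : ℕ → Bool) (b : Bool) :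
    cnt (comb m₁ v₁ v₂) b (2*m₁+2) = (if true = b then 1 else 0) + cnt v₁ b (2*m₁)
      + (if false = b then 1 else 0) := by
  rw [show 2*m₁+2 = (2*m₁+1)+1 from rfl, cnt_succ,
    show 2*m₁+1 = 2*m₁+1 from rfl, cnt_comb_low m₁ v₁ v₂ b (le_refl _), comb_mid]

lemma cnt_comb_high (m₁ : ℕ) (v₁ v₂ : ℕ → Bool) (b : Bool) (t : ℕ) :
    cnt (comb m₁ v₁ v₂) b (2*m₁+2+t)
      = cnt (comb m₁ v₁ v₂) b (2*m₁+2) + cnt v₂ b t := by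
  rw [cnt_add]
  congr 1
  apply cnt_congr
  intro j _
  exact comb_in₂ m₁ v₁ v₂ j

section CombProps

variable {m₁ m₂ : ℕ} {v₁ v₂ : ℕ → Bool}

lemma comb_strict (hp1 : ∀ l ≤ 2*m₁, cnt v₁ false l ≤ cnt v₁ true l)
    {l : ℕ} (h1 : 1 ≤ l) (h2 : l ≤ 2*m₁+1) :
    cnt (comb m₁ v₁ v₂) false l < cnt (comb m₁ v₁ v₂) true l := by
  obtain ⟨t, rfl⟩ : ∃ t, l = t + 1 := ⟨l - 1, by omega⟩
  rw [cnt_comb_low m₁ v₁ v₂ false (by omega), cnt_comb_low m₁ v₁ v₂ true (by omega)]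
  have := hp1 t (by omega)
  rw [if_neg (show ¬((true:Bool) = false) by simp), if_pos rfl]
  omega

lemma comb_cnt_true_mid (hc1 : cnt v₁ true (2*m₁) = m₁) :
    cnt (comb m₁ v₁ v₂) true (2*m₁+2) = m₁ + 1 := by
  rw [cnt_comb_mid, if_pos rfl, if_neg (show ¬((false:Bool) = true) by simp), hc1]
  omega

lemma comb_cnt_false_mid (hc1 : cnt v₁ true (2*m₁) = m₁) :
    cnt (comb m₁ v₁ v₂) false (2*m₁+2) = m₁ + 1 := by
  rw [cnt_comb_mid, if_neg (show ¬((true:Bool) = false) by simp), if_pos rfl]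
  have := cnt_true_add_false v₁ (2*m₁)
  omega

lemma comb_cnt_true_top (hc1 : cnt v₁ true (2*m₁) = m₁) (hc2 : cnt v₂ true (2*m₂) = m₂) :
    cnt (comb m₁ v₁ v₂) true (2*(m₁+m₂+1)) = m₁+m₂+1 := by
  rw [show 2*(m₁+m₂+1) = 2*m₁+2+(2*m₂) by ring, cnt_comb_high,
    comb_cnt_true_mid hc1, hc2]
  omega

lemma comb_prefix (hc1 : cnt v₁ true (2*m₁) = m₁)
    (hp1 : ∀ l ≤ 2*m₁, cnt v₁ false l ≤ cnt v₁ true l)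
    (hp2 : ∀ l ≤ 2*m₂, cnt v₂ false l ≤ cnt v₂ true l) :
    ∀ l ≤ 2*(m₁+m₂+1),
      cnt (comb m₁ v₁ v₂) false l ≤ cnt (comb m₁ v₁ v₂) true l := by
  intro l hl
  rcases Nat.eq_zero_or_pos l with h0 | h0
  · subst h0; simp [cnt_zero]
  rcases Nat.lt_or_ge l (2*m₁+2) with hlow | hhigh
  · exact le_of_lt (comb_strict hp1 h0 (by omega))
  · obtain ⟨t, rfl⟩ : ∃ t, l = 2*m₁+2+t := ⟨l - (2*m₁+2), by omega⟩
    rw [cnt_comb_high, cnt_comb_high, comb_cnt_true_mid hc1, comb_cnt_false_mid hc1]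
    have := hp2 t (by omega)
    omega

/-- Return-count of the combined word. -/
lemma comb_ret (hc1 : cnt v₁ true (2*m₁) = m₁)
    (hp1 : ∀ l ≤ 2*m₁, cnt v₁ false l ≤ cnt v₁ true l) :
    ((Finset.Icc 1 (2*(m₁+m₂+1))).filter (fun l =>
        cnt (comb m₁ v₁ v₂) true l = cnt (comb m₁ v₁ v₂) false l)).card
      = ((Finset.Icc 1 (2*m₂)).filter (fun l =>
        cnt v₂ true l = cnt v₂ false l)).card + 1 := by
  have hset : (Finset.Icc 1 (2*(m₁+m₂+1))).filter (fun l =>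
        cnt (comb m₁ v₁ v₂) true l = cnt (comb m₁ v₁ v₂) false l)
      = insert (2*m₁+2) (((Finset.Icc 1 (2*m₂)).filter (fun l =>
        cnt v₂ true l = cnt v₂ false l)).image (fun t => t + (2*m₁+2))) := by
    ext l
    simp only [Finset.mem_insert, Finset.mem_image, Finset.mem_filter, Finset.mem_Icc]
    constructor
    · rintro ⟨⟨hl1, hl2⟩, heq⟩
      rcases Nat.lt_or_ge l (2*m₁+2) with hlow | hhigh
      · exact absurd heq (by have := comb_strict (v₂ := v₂) hp1 hl1 (by omega); omega)
      rcases Nat.eq_or_lt_of_le hhigh with hmid | hhi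
      · exact Or.inl hmid.symm
      · right
        refine ⟨l - (2*m₁+2), ⟨⟨by omega, by omega⟩, ?_⟩, by omega⟩
        obtain ⟨t, rfl⟩ : ∃ t, l = 2*m₁+2+t := ⟨l - (2*m₁+2), by omega⟩
        rw [cnt_comb_high, cnt_comb_high, comb_cnt_true_mid hc1,
          comb_cnt_false_mid hc1] at heq
        have ht : t = 2*m₁+2+t - (2*m₁+2) := by omega
        rw [← ht]
        omega
    · rintro (rfl | ⟨t, ⟨⟨ht1, ht2⟩, heq⟩, rfl⟩)
      · refine ⟨⟨by omega, by omega⟩, ?_⟩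
        rw [comb_cnt_true_mid hc1, comb_cnt_false_mid hc1]
      · refine ⟨⟨by omega, by omega⟩, ?_⟩
        rw [show t + (2*m₁+2) = 2*m₁+2+t by ring, cnt_comb_high, cnt_comb_high,
          comb_cnt_true_mid hc1, comb_cnt_false_mid hc1]
        omega
  rw [hset, Finset.card_insert_of_notMem, Finset.card_image_of_injective _
    (add_left_injective _)]
  intro hmem
  simp only [Finset.mem_image, Finset.mem_filter, Finset.mem_Icc] at hmem
  obtain ⟨t, ⟨⟨ht1, _⟩, _⟩, habs⟩ := hmem
  omega

lemma np_succ (v : ℕ → Bool) (n : ℕ) :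
    np v (n+1) = np v n + if v n = false then cnt v true n else 0 := by
  unfold np
  rw [Finset.sum_range_succ]

lemma np_add (v : ℕ → Bool) (s t : ℕ) :
    np v (s + t) = np v s + ∑ j ∈ Finset.range t,
      (if v (s + j) = false then cnt v true (s + j) else 0) := by
  induction t with
  | zero => simp
  | succ t ih => rw [← Nat.add_assoc, np_succ, ih, Finset.sum_range_succ, Nat.add_assoc]

/-- `np` of the combined word. -/
lemma comb_np (hc1 : cnt v₁ true (2*m₁) = m₁) (hc2 : cnt v₂ true (2*m₂) = m₂) :
    np (comb m₁ v₁ v₂) (2*(m₁+m₂+1))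
      = np v₁ (2*m₁) + np v₂ (2*m₂) + (2*m₁ + 1 + m₂ + m₁*m₂) := by
  have hf1 : cnt v₁ false (2*m₁) = m₁ := by
    have := cnt_true_add_false v₁ (2*m₁); omega
  have hf2 : cnt v₂ false (2*m₂) = m₂ := by
    have := cnt_true_add_false v₂ (2*m₂); omega
  have h1 : np (comb m₁ v₁ v₂) (2*m₁+1) = m₁ + np v₁ (2*m₁) := by
    rw [show 2*m₁+1 = 1 + 2*m₁ by ring, np_add]
    have hnp1 : np (comb m₁ v₁ v₂) 1 = 0 := by
      rw [show (1:ℕ) = 0+1 from rfl, np_succ, comb_zero]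
      simp [np]
    rw [hnp1]
    have : ∀ j ∈ Finset.range (2*m₁),
        (if comb m₁ v₁ v₂ (1 + j) = false then cnt (comb m₁ v₁ v₂) true (1 + j) else 0)
        = (if v₁ j = false then 1 + cnt v₁ true j else 0) := by
      intro j hj
      rw [Finset.mem_range] at hj
      rw [show 1 + j = j + 1 by ring, comb_in₁ m₁ v₁ v₂ hj,
        cnt_comb_low m₁ v₁ v₂ true (by omega)]
      simp
    rw [Finset.sum_congr rfl this]
    have : ∑ j ∈ Finset.range (2*m₁), (if v₁ j = false then 1 + cnt v₁ true j else 0)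
        = (∑ j ∈ Finset.range (2*m₁), (if v₁ j = false then 1 else 0))
          + ∑ j ∈ Finset.range (2*m₁), (if v₁ j = false then cnt v₁ true j else 0) := by
      rw [← Finset.sum_add_distrib]
      apply Finset.sum_congr rfl
      intro j _
      split_ifs <;> simp
    rw [this, ← Finset.card_filter]
    have : ((Finset.range (2*m₁)).filter (fun j => v₁ j = false)).card = m₁ := hf1
    rw [this]
    unfold np
    omega
  have h2 : np (comb m₁ v₁ v₂) (2*m₁+2) = 2*m₁ + 1 + np v₁ (2*m₁) := by
    rw [np_succ, h1, comb_mid, if_pos rfl, cnt_comb_low m₁ v₁ v₂ true (le_refl _),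
      if_pos rfl, hc1]
    omega
  rw [show 2*(m₁+m₂+1) = (2*m₁+2) + 2*m₂ by ring, np_add, h2]
  have : ∀ j ∈ Finset.range (2*m₂),
      (if comb m₁ v₁ v₂ (2*m₁+2 + j) = false
        then cnt (comb m₁ v₁ v₂) true (2*m₁+2 + j) else 0)
      = (if v₂ j = false then (m₁ + 1) + cnt v₂ true j else 0) := by
    intro j hj
    rw [comb_in₂, cnt_comb_high, comb_cnt_true_mid hc1]
  rw [Finset.sum_congr rfl this]
  have : ∑ j ∈ Finset.range (2*m₂), (if v₂ j = false then (m₁ + 1) + cnt v₂ true j else 0)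
      = (∑ j ∈ Finset.range (2*m₂), (if v₂ j = false then (m₁+1) else 0))
        + ∑ j ∈ Finset.range (2*m₂), (if v₂ j = false then cnt v₂ true j else 0) := by
    rw [← Finset.sum_add_distrib]
    apply Finset.sum_congr rfl
    intro j _
    split_ifs <;> simp
  rw [this]
  have hconst : ∑ j ∈ Finset.range (2*m₂), (if v₂ j = false then (m₁+1) else 0)
      = (m₁+1) * m₂ := by
    have : ∑ j ∈ Finset.range (2*m₂), (if v₂ j = false then (m₁+1) else 0)
        = (m₁+1) * ((Finset.range (2*m₂)).filter (fun j => v₂ j = false)).card := by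
      rw [Finset.card_filter, Finset.mul_sum]
      apply Finset.sum_congr rfl
      intro j _
      split_ifs <;> simp
    rw [this]
    have : ((Finset.range (2*m₂)).filter (fun j => v₂ j = false)).card = m₂ := hf2
    rw [this]
  rw [hconst]
  have : ∑ j ∈ Finset.range (2*m₂), (if v₂ j = false then cnt v₂ true j else 0)
      = np v₂ (2*m₂) := rfl
  rw [this]
  ring

end CombProps

/-! ### Splitting a Dyck word at its first return -/

section Split

variable {m : ℕ} {w : Fin (2*(m+1)) → Bool}

/-- The set of returns. -/
noncomputable def retSet (v : ℕ → Bool) (M : ℕ) : Finset ℕ :=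
  (Finset.Icc 1 M).filter (fun l => cnt v true l = cnt v false l)

lemma retSet_nonempty (hD : isDyck (m+1) w) :
    (retSet (extW w) (2*(m+1))).Nonempty := by
  obtain ⟨hc, hp⟩ := (isDyck_iff (m+1) w).1 hD
  refine ⟨2*(m+1), ?_⟩
  unfold retSet
  simp only [Finset.mem_filter, Finset.mem_Icc]
  have := cnt_true_add_false (extW w) (2*(m+1))
  constructor
  · omega
  · omega

/-- Position of the first return. -/
noncomputable def firstRet (v : ℕ → Bool) (M : ℕ) (h : (retSet v M).Nonempty) : ℕ :=
  (retSet v M).min' h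

lemma dyck_first_true (hD : isDyck (m+1) w) : extW w 0 = true := by
  obtain ⟨hc, hp⟩ := (isDyck_iff (m+1) w).1 hD
  have h1 : cnt (extW w) false (0+1) ≤ cnt (extW w) true (0+1) := hp 1 (by omega)
  rw [cnt_succ, cnt_succ, cnt_zero, cnt_zero] at h1
  rcases h : extW w 0 with _ | _
  · rw [h] at h1; simp at h1
  · rfl

lemma firstRet_spec (hD : isDyck (m+1) w) {r : ℕ}
    (hrdef : r = firstRet (extW w) (2*(m+1)) (retSet_nonempty hD)) :
    1 ≤ r ∧ r ≤ 2*(m+1) ∧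
    cnt (extW w) true r = cnt (extW w) false r ∧
    (∀ l, 1 ≤ l → l < r → cnt (extW w) false l < cnt (extW w) true l) := by
  obtain ⟨hc, hp⟩ := (isDyck_iff (m+1) w).1 hD
  have hmem : r ∈ retSet (extW w) (2*(m+1)) := by
    rw [hrdef]; exact Finset.min'_mem _ _
  unfold retSet at hmem
  simp only [Finset.mem_filter, Finset.mem_Icc] at hmem
  refine ⟨hmem.1.1, hmem.1.2, hmem.2, ?_⟩
  intro l hl1 hl2
  have hne : cnt (extW w) true l ≠ cnt (extW w) false l := by
    intro heq
    have hlm : l ∈ retSet (extW w) (2*(m+1)) := by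
      unfold retSet
      simp only [Finset.mem_filter, Finset.mem_Icc]
      exact ⟨⟨hl1, by omega⟩, heq⟩
    have h2 : firstRet (extW w) (2*(m+1)) (retSet_nonempty hD) ≤ l :=
      Finset.min'_le _ l hlm
    omega
  have := hp l (by omega)
  omega

lemma firstRet_even_etc (hD : isDyck (m+1) w) {r : ℕ}
    (hrdef : r = firstRet (extW w) (2*(m+1)) (retSet_nonempty hD)) :
    2 ≤ r ∧ r = 2 * (r / 2) ∧
    cnt (extW w) true r = r / 2 ∧ cnt (extW w) false r = r / 2 ∧
    extW w (r - 1) = false := by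
  obtain ⟨hr1, hr2, hreq, hrmin⟩ := firstRet_spec hD hrdef
  obtain ⟨hc, hp⟩ := (isDyck_iff (m+1) w).1 hD
  have htot := cnt_true_add_false (extW w) r
  have hr2' : 2 ≤ r := by
    rcases Nat.eq_or_lt_of_le hr1 with h | h
    · exfalso
      have h1 : cnt (extW w) true 1 = 1 := by
        have h0 : cnt (extW w) true (0+1)
            = cnt (extW w) true 0 + if extW w 0 = true then 1 else 0 :=
          cnt_succ (extW w) true 0
        rw [cnt_zero, dyck_first_true hD, if_pos rfl] at h0
        simpa using h0
      have h2 : cnt (extW w) false 1 = 0 := by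
        have := cnt_true_add_false (extW w) 1
        omega
      rw [← h] at hreq
      omega
    · omega
  have hlast : extW w (r - 1) = false := by
    rcases hres : extW w (r - 1) with _ | _
    · rfl
    · exfalso
      have hstep : cnt (extW w) true ((r-1)+1) = cnt (extW w) true (r-1) + 1 := by
        rw [cnt_succ, hres, if_pos rfl]
      have hstep2 : cnt (extW w) false ((r-1)+1) = cnt (extW w) false (r-1) := by
        rw [cnt_succ, hres]
        simp
      rw [show r - 1 + 1 = r by omega] at hstep hstep2
      have := hrmin (r-1) (by omega) (by omega)
      omega
  exact ⟨hr2', by omega, by omega, by omega, hlast⟩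

end Split

lemma cnt_one (v : ℕ → Bool) (b : Bool) : cnt v b 1 = if v 0 = b then 1 else 0 := by
  have h := cnt_succ v b 0
  rw [cnt_zero] at h
  simpa using h

section SplitPieces

variable {m : ℕ} {w : Fin (2*(m+1)) → Bool}

lemma split_pieces (hD : isDyck (m+1) w) {r a : ℕ}
    (hrdef : r = firstRet (extW w) (2*(m+1)) (retSet_nonempty hD))
    (ha : 2*a + 2 = r) :
    a ≤ m ∧
    isDyck a (fun j : Fin (2*a) => extW w ((j:ℕ)+1)) ∧
    isDyck (m-a) (fun j : Fin (2*(m-a)) => extW w ((j:ℕ)+r)) ∧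
    (∀ j : Fin (2*(m+1)), w j = comb a (extW (fun j : Fin (2*a) => extW w ((j:ℕ)+1)))
        (extW (fun j : Fin (2*(m-a)) => extW w ((j:ℕ)+r))) (j:ℕ)) := by
  obtain ⟨hr1, hr2, hreq, hrmin⟩ := firstRet_spec hD hrdef
  obtain ⟨hr2', heven, hctr, hcfr, hlast⟩ := firstRet_even_etc hD hrdef
  obtain ⟨hc, hp⟩ := (isDyck_iff (m+1) w).1 hD
  have hv0 := dyck_first_true hD
  have ham : a ≤ m := by omega
  set W₁ : Fin (2*a) → Bool := fun j => extW w ((j:ℕ)+1) with hW₁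
  set W₂ : Fin (2*(m-a)) → Bool := fun j => extW w ((j:ℕ)+r) with hW₂
  have key₁ : ∀ (b : Bool) (l : ℕ), l ≤ 2*a →
      cnt (extW W₁) b l = cnt (fun t => extW w (1+t)) b l := by
    intro b l hl
    apply cnt_congr
    intro t ht
    have htl : t < 2*a := lt_of_lt_of_le ht hl
    calc extW W₁ t = W₁ ⟨t, htl⟩ := dif_pos htl
      _ = extW w (t+1) := rfl
      _ = extW w (1+t) := by congr 1; omega
  have key₂ : ∀ (b : Bool) (l : ℕ), l ≤ 2*(m-a) →
      cnt (extW W₂) b l = cnt (fun t => extW w (r+t)) b l := by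
    intro b l hl
    apply cnt_congr
    intro t ht
    have htl : t < 2*(m-a) := lt_of_lt_of_le ht hl
    calc extW W₂ t = W₂ ⟨t, htl⟩ := dif_pos htl
      _ = extW w (t+r) := rfl
      _ = extW w (r+t) := by congr 1; omega
  have shift₁ : ∀ (b : Bool) (l : ℕ), cnt (extW w) b (1+l)
      = (if extW w 0 = b then 1 else 0) + cnt (fun t => extW w (1+t)) b l := by
    intro b l
    rw [cnt_add, cnt_one]
  have shift₂ : ∀ (b : Bool) (l : ℕ), cnt (extW w) b (r+l)
      = cnt (extW w) b r + cnt (fun t => extW w (r+t)) b l := by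
    intro b l
    rw [cnt_add]
  have hcr1t : cnt (extW w) true (r-1) = r/2 := by
    have h := cnt_succ (extW w) true (r-1)
    rw [hlast, show r - 1 + 1 = r by omega] at h
    simp at h
    omega
  -- counts of W₁
  have hW₁t : cnt (extW W₁) true (2*a) = a := by
    rw [key₁ true (2*a) (le_refl _)]
    have h := shift₁ true (2*a)
    rw [hv0, if_pos rfl, show 1 + 2*a = r - 1 by omega, hcr1t] at h
    omega
  have hW₁pre : ∀ l ≤ 2*a, cnt (extW W₁) false l ≤ cnt (extW W₁) true l := by
    intro l hl
    rcases Nat.eq_zero_or_pos l with h0 | h0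
    · subst h0; rw [cnt_zero, cnt_zero]
    rw [key₁ true l hl, key₁ false l hl]
    have hT := shift₁ true l
    have hF := shift₁ false l
    rw [hv0, if_pos rfl] at hT
    rw [hv0, if_neg (by simp)] at hF
    have hstrict := hrmin (1+l) (by omega) (by omega)
    omega
  -- counts of W₂
  have hW₂t : cnt (extW W₂) true (2*(m-a)) = m - a := by
    rw [key₂ true (2*(m-a)) (le_refl _)]
    have h := shift₂ true (2*(m-a))
    rw [show r + 2*(m-a) = 2*(m+1) by omega, hc, hctr] at h
    omega
  have hW₂pre : ∀ l ≤ 2*(m-a), cnt (extW W₂) false l ≤ cnt (extW W₂) true l := by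
    intro l hl
    rw [key₂ true l hl, key₂ false l hl]
    have hT := shift₂ true l
    have hF := shift₂ false l
    have hple := hp (r+l) (by omega)
    rw [hctr] at hT
    rw [hcfr] at hF
    omega
  refine ⟨ham, (isDyck_iff a W₁).2 ⟨hW₁t, hW₁pre⟩,
    (isDyck_iff (m-a) W₂).2 ⟨hW₂t, hW₂pre⟩, ?_⟩
  intro j
  have hj := j.isLt
  have hwj : w j = extW w (j:ℕ) := by
    unfold extW
    rw [dif_pos hj]
  rcases Nat.eq_zero_or_pos (j:ℕ) with h0 | h0
  · rw [hwj, h0, comb_zero, hv0]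
  rcases Nat.lt_or_ge (j:ℕ) (2*a+1) with hlow | hge
  · -- 1 ≤ j ≤ 2a
    obtain ⟨t, ht⟩ : ∃ t, (j:ℕ) = t + 1 := ⟨(j:ℕ) - 1, by omega⟩
    have htl : t < 2*a := by omega
    rw [hwj, ht, comb_in₁ a _ _ htl]
    have e : extW W₁ t = W₁ ⟨t, htl⟩ := dif_pos htl
    calc extW w (t+1) = W₁ ⟨t, htl⟩ := rfl
      _ = extW W₁ t := e.symm
  rcases Nat.eq_or_lt_of_le hge with hmid | hhigh
  · -- j = 2a+1 = r-1
    rw [hwj, ← hmid, comb_mid, show 2*a+1 = r - 1 by omega, hlast]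
  · -- j ≥ 2a+2
    obtain ⟨t, ht⟩ : ∃ t, (j:ℕ) = 2*a+2+t := ⟨(j:ℕ) - (2*a+2), by omega⟩
    have htl : t < 2*(m-a) := by omega
    rw [hwj, ht, comb_in₂]
    have ht2 : t + r = 2*a+2+t := by omega
    calc extW w (2*a+2+t) = extW w (t+r) := by rw [ht2]
      _ = W₂ ⟨t, htl⟩ := rfl
      _ = extW W₂ t := by
          have e : extW W₂ t = W₂ ⟨t, htl⟩ := dif_pos htl
          exact e.symm

end SplitPieces

/-! ### The combining map on `Fin` words -/

lemma two_tri_int (k : ℕ) : (2 * tri k : ℤ) = (k:ℤ)*k - k := by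
  cases k with
  | zero => simp [tri]
  | succ j =>
    have h := two_tri (j+1)
    simp only [Nat.add_sub_cancel] at h
    have h2 : ((2 * tri (j+1) : ℕ) : ℤ) = (((j+1) * j : ℕ) : ℤ) := by rw [h]
    push_cast at h2
    push_cast
    linarith

def combF (m a : ℕ) (w₁ : Fin (2*a) → Bool) (w₂ : Fin (2*(m-a)) → Bool) :
    Fin (2*(m+1)) → Bool :=
  fun j => comb a (extW w₁) (extW w₂) (j : ℕ)

lemma extW_combF {m a : ℕ} (ham : a ≤ m) (w₁ : Fin (2*a) → Bool)
    (w₂ : Fin (2*(m-a)) → Bool) :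
    extW (combF m a w₁ w₂) = comb a (extW w₁) (extW w₂) := by
  funext j
  by_cases h : j < 2*(m+1)
  · exact dif_pos h
  · have h1 : extW (combF m a w₁ w₂) j = false := dif_neg h
    rw [h1]
    unfold comb
    rw [if_neg (show ¬ j = 0 by omega), if_neg (show ¬ j ≤ 2*a by omega),
      if_neg (show ¬ j = 2*a+1 by omega)]
    have e : extW w₂ (j - (2*a+2)) = false :=
      dif_neg (show ¬ (j - (2*a+2) < 2*(m-a)) by omega)
    exact e.symm

section CombF

variable {m a : ℕ} {w₁ : Fin (2*a) → Bool} {w₂ : Fin (2*(m-a)) → Bool}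

lemma combF_isDyck (ham : a ≤ m) (h₁ : isDyck a w₁) (h₂ : isDyck (m-a) w₂) :
    isDyck (m+1) (combF m a w₁ w₂) := by
  obtain ⟨hc1, hp1⟩ := (isDyck_iff a w₁).1 h₁
  obtain ⟨hc2, hp2⟩ := (isDyck_iff (m-a) w₂).1 h₂
  apply (isDyck_iff (m+1) (combF m a w₁ w₂)).2
  rw [extW_combF ham]
  constructor
  · have h := comb_cnt_true_top hc1 hc2
    rw [show 2*(a+(m-a)+1) = 2*(m+1) by omega] at h
    omega
  · intro l hl
    exact comb_prefix hc1 hp1 hp2 l (by omega)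

lemma combF_ret (ham : a ≤ m) (h₁ : isDyck a w₁) (h₂ : isDyck (m-a) w₂) :
    retCount (m+1) (combF m a w₁ w₂) = retCount (m-a) w₂ + 1 := by
  obtain ⟨hc1, hp1⟩ := (isDyck_iff a w₁).1 h₁
  rw [retCount_eq, retCount_eq, extW_combF ham]
  have h := comb_ret (m₂ := m-a) (v₂ := extW w₂) hc1 hp1
  rw [show 2*(a+(m-a)+1) = 2*(m+1) by omega] at h
  exact h

lemma combF_area (ham : a ≤ m) (h₁ : isDyck a w₁) (h₂ : isDyck (m-a) w₂) :
    area (m+1) (combF m a w₁ w₂) = area a w₁ + a + area (m-a) w₂ := by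
  obtain ⟨hc1, hp1⟩ := (isDyck_iff a w₁).1 h₁
  obtain ⟨hc2, hp2⟩ := (isDyck_iff (m-a) w₂).1 h₂
  have hD := combF_isDyck ham h₁ h₂
  have E := area_np hD
  have E1 := area_np h₁
  have E2 := area_np h₂
  have hNp := comb_np (v₁ := extW w₁) (v₂ := extW w₂) hc1 hc2
  rw [show 2*(a+(m-a)+1) = 2*(m+1) by omega] at hNp
  rw [extW_combF ham] at E
  have T := two_tri_int (m+1)
  have T1 := two_tri_int a
  have T2 := two_tri_int (m-a)
  rw [Nat.cast_sub ham] at T2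
  have goal2 : 2 * (area (m+1) (combF m a w₁ w₂) : ℤ)
      = 2*(area a w₁ : ℤ) + 2*(a:ℤ) + 2*(area (m-a) w₂ : ℤ) := by
    have E' : (area (m+1) (combF m a w₁ w₂) : ℤ) + (m+1)*(m+1)
        = (tri (m+1) : ℤ) + (np (comb a (extW w₁) (extW w₂)) (2*(m+1)) : ℤ) := by
      exact_mod_cast congrArg (Nat.cast : ℕ → ℤ) E
    have E1' : (area a w₁ : ℤ) + (a:ℤ)*a
        = (tri a : ℤ) + (np (extW w₁) (2*a) : ℤ) := by
      exact_mod_cast congrArg (Nat.cast : ℕ → ℤ) E1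
    have E2' : (area (m-a) w₂ : ℤ) + ((m:ℤ)-a)*((m:ℤ)-a)
        = (tri (m-a) : ℤ) + (np (extW w₂) (2*(m-a)) : ℤ) := by
      have := congrArg (Nat.cast : ℕ → ℤ) E2
      push_cast [Nat.cast_sub ham] at this
      push_cast
      linarith [this]
    have hNp' : (np (comb a (extW w₁) (extW w₂)) (2*(m+1)) : ℤ)
        = (np (extW w₁) (2*a) : ℤ) + (np (extW w₂) (2*(m-a)) : ℤ)
          + (2*(a:ℤ) + 1 + ((m:ℤ)-a) + (a:ℤ)*((m:ℤ)-a)) := by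
      have := congrArg (Nat.cast : ℕ → ℤ) hNp
      push_cast [Nat.cast_sub ham] at this
      push_cast
      linarith [this]
    push_cast at T T1 T2
    push_cast
    linear_combination 2*E' - 2*E1' - 2*E2' + 2*hNp' + T - T1 - T2
  omega

lemma firstRet_combF (ham : a ≤ m) (h₁ : isDyck a w₁) (h₂ : isDyck (m-a) w₂)
    (hne : (retSet (extW (combF m a w₁ w₂)) (2*(m+1))).Nonempty) :
    firstRet (extW (combF m a w₁ w₂)) (2*(m+1)) hne = 2*a+2 := by
  obtain ⟨hc1, hp1⟩ := (isDyck_iff a w₁).1 h₁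
  have hmem : (2*a+2) ∈ retSet (extW (combF m a w₁ w₂)) (2*(m+1)) := by
    unfold retSet
    simp only [Finset.mem_filter, Finset.mem_Icc]
    rw [extW_combF ham]
    refine ⟨⟨by omega, by omega⟩, ?_⟩
    rw [comb_cnt_true_mid hc1, comb_cnt_false_mid hc1]
  apply le_antisymm
  · exact Finset.min'_le _ _ hmem
  · apply Finset.le_min'
    intro l hl
    by_contra hlt
    push_neg at hlt
    unfold retSet at hl
    simp only [Finset.mem_filter, Finset.mem_Icc] at hl
    rw [extW_combF ham] at hl
    have := comb_strict (v₂ := extW w₂) hp1 hl.1.1 (by omega)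
    omega

end CombF

/-! ### The decomposition bijection -/

noncomputable def dyckFinset (k : ℕ) : Finset (Fin (2*k) → Bool) :=
  Finset.univ.filter (fun w => isDyck k w)

lemma decomp {M : Type*} [AddCommMonoid M] (m : ℕ) (F : ℕ → ℕ → M) :
    ∑ w ∈ dyckFinset (m+1), F (area (m+1) w) (retCount (m+1) w)
      = ∑ x ∈ (Finset.range (m+1)).sigma (fun a =>
            (dyckFinset a) ×ˢ (dyckFinset (m-a))),
          F (area x.1 x.2.1 + x.1 + area (m - x.1) x.2.2)
            (retCount (m - x.1) x.2.2 + 1) := by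
  symm
  apply Finset.sum_bij (fun (x : Σ a : ℕ, ((Fin (2*a) → Bool) × (Fin (2*(m-a)) → Bool)))
    (_ : x ∈ _) => combF m x.1 x.2.1 x.2.2)
  · -- maps into
    rintro ⟨a, w₁, w₂⟩ hx
    simp only [Finset.mem_sigma, Finset.mem_product, Finset.mem_range,
      dyckFinset, Finset.mem_filter, Finset.mem_univ, true_and] at hx
    obtain ⟨ha, h₁, h₂⟩ := hx
    simp only [dyckFinset, Finset.mem_filter, Finset.mem_univ, true_and]
    exact combF_isDyck (by omega) h₁ h₂
  · -- injective
    rintro ⟨a, w₁, w₂⟩ hx ⟨a', w₁', w₂'⟩ hy heq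
    simp only [Finset.mem_sigma, Finset.mem_product, Finset.mem_range,
      dyckFinset, Finset.mem_filter, Finset.mem_univ, true_and] at hx hy
    obtain ⟨ha, h₁, h₂⟩ := hx
    obtain ⟨ha', h₁', h₂'⟩ := hy
    simp only at heq
    have ham : a ≤ m := by omega
    have ham' : a' ≤ m := by omega
    have hext : extW (combF m a w₁ w₂) = extW (combF m a' w₁' w₂') := by rw [heq]
    have haa : a = a' := by
      have e1 := firstRet_combF ham h₁ h₂
      have e2 := firstRet_combF ham' h₁' h₂'
      rw [hext] at e1
      have := e1 (retSet_nonempty (combF_isDyck ham' h₁' h₂'))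
      have h2 := e2 (retSet_nonempty (combF_isDyck ham' h₁' h₂'))
      omega
    subst haa
    have hw₁ : w₁ = w₁' := by
      funext j
      have hj : (j:ℕ) < 2*a := j.isLt
      have hcongr := congrFun heq ⟨(j:ℕ)+1, by omega⟩
      simp only [combF] at hcongr
      rw [comb_in₁ a _ _ hj, comb_in₁ a _ _ hj] at hcongr
      have e1 : extW w₁ (j:ℕ) = w₁ ⟨(j:ℕ), hj⟩ := dif_pos hj
      have e2 : extW w₁' (j:ℕ) = w₁' ⟨(j:ℕ), hj⟩ := dif_pos hj
      rw [e1, e2] at hcongr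
      simpa using hcongr
    have hw₂ : w₂ = w₂' := by
      funext j
      have hj : (j:ℕ) < 2*(m-a) := j.isLt
      have hcongr := congrFun heq ⟨2*a+2+(j:ℕ), by omega⟩
      simp only [combF] at hcongr
      rw [comb_in₂, comb_in₂] at hcongr
      have e1 : extW w₂ (j:ℕ) = w₂ ⟨(j:ℕ), hj⟩ := dif_pos hj
      have e2 : extW w₂' (j:ℕ) = w₂' ⟨(j:ℕ), hj⟩ := dif_pos hj
      rw [e1, e2] at hcongr
      simpa using hcongr
    subst hw₁
    subst hw₂
    rfl
  · -- surjective
    intro w hw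
    simp only [dyckFinset, Finset.mem_filter, Finset.mem_univ, true_and] at hw
    set r := firstRet (extW w) (2*(m+1)) (retSet_nonempty hw) with hrdef
    obtain ⟨hr2', heven, hctr, hcfr, hlast⟩ := firstRet_even_etc hw hrdef
    obtain ⟨hr1, hr2, hreq, hrmin⟩ := firstRet_spec hw hrdef
    have ha : 2*(r/2-1) + 2 = r := by omega
    obtain ⟨ham, hd₁, hd₂, hcomb⟩ := split_pieces hw hrdef ha
    refine ⟨⟨r/2-1, (fun j : Fin (2*(r/2-1)) => extW w ((j:ℕ)+1),
      fun j : Fin (2*(m-(r/2-1))) => extW w ((j:ℕ)+r))⟩, ?_, ?_⟩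
    · simp only [Finset.mem_sigma, Finset.mem_product, Finset.mem_range,
        dyckFinset, Finset.mem_filter, Finset.mem_univ, true_and]
      exact ⟨by omega, hd₁, hd₂⟩
    · funext j
      exact (hcomb j).symm
  · -- values
    rintro ⟨a, w₁, w₂⟩ hx
    simp only [Finset.mem_sigma, Finset.mem_product, Finset.mem_range,
      dyckFinset, Finset.mem_filter, Finset.mem_univ, true_and] at hx
    obtain ⟨ha, h₁, h₂⟩ := hx
    have ham : a ≤ m := by omega
    rw [combF_area ham h₁ h₂, combF_ret ham h₁ h₂]

/-! ### Scalar facts in `K2` -/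

lemma pv_ne_zero : (pv : K2) ≠ 0 := by
  unfold pv
  simp only [ne_eq, map_eq_zero]
  exact RatFunc.X_ne_zero

lemma yv_ne_zero : (yv : K2) ≠ 0 := RatFunc.X_ne_zero

lemma pv_pow_ne_one {k : ℕ} (hk : 1 ≤ k) : (pv : K2) ^ k ≠ 1 := by
  unfold pv
  rw [← map_pow]
  intro h
  have h1 : (RatFunc.X : RatFunc ℚ) ^ k = 1 := by
    have : (RatFunc.C (RatFunc.X ^ k) : K2) = RatFunc.C 1 := by rw [h, map_one]
    exact RingHom.injective (RatFunc.C : RatFunc ℚ →+* K2) this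
  have h2 : (algebraMap (Polynomial ℚ) (RatFunc ℚ)) (Polynomial.X ^ k)
      = algebraMap (Polynomial ℚ) (RatFunc ℚ) 1 := by
    rw [map_pow, RatFunc.algebraMap_X, h1, map_one]
  have h3 := RatFunc.algebraMap_injective ℚ h2
  have h4 := congrArg Polynomial.natDegree h3
  rw [Polynomial.natDegree_X_pow, Polynomial.natDegree_one] at h4
  omega

lemma one_sub_pv_pow_ne_zero {k : ℕ} (hk : 1 ≤ k) : (1 : K2) - pv ^ k ≠ 0 := by
  intro h
  exact pv_pow_ne_one hk (by linear_combination -h)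

/-! ### The coefficients of `A` and the Dyck generating coefficients -/

noncomputable def aa (n : ℕ) : K2 :=
  (-1 : K2) ^ n * pv ^ (n ^ 2) * yv ^ (2 * n) /
    ∏ i ∈ Finset.range n, (1 - pv ^ (i + 1))

lemma prod_pp_ne_zero (n : ℕ) : (∏ i ∈ Finset.range n, ((1:K2) - pv ^ (i + 1))) ≠ 0 := by
  apply Finset.prod_ne_zero_iff.2
  intro i _
  exact one_sub_pv_pow_ne_zero (by omega)

lemma aa_zero : aa 0 = 1 := by
  unfold aa
  simp

lemma aa_rec (n : ℕ) : aa (n+1) * (1 - pv^(n+1)) = -(pv^(2*n+1) * yv^2 * aa n) := by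
  unfold aa
  rw [Finset.prod_range_succ]
  have h1 := prod_pp_ne_zero n
  have h2 : (1:K2) - pv^(n+1) ≠ 0 := one_sub_pv_pow_ne_zero (by omega)
  rw [show (n+1)^2 = n^2 + (2*n+1) by ring, show 2*(n+1) = 2*n + 2 by ring,
    pow_add, pow_add]
  field_simp
  ring

lemma retCount_le (k : ℕ) (w : Fin (2*k) → Bool) : retCount k w ≤ 2*k := by
  unfold retCount
  calc _ ≤ (Finset.Icc 1 (2*k)).card := Finset.card_filter_le _ _
  _ = 2*k := by rw [Nat.card_Icc]; omega

noncomputable def gD (k m : ℕ) : K2 :=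
  ∑ w ∈ dyckFinset m, pv ^ (area m w + k * m) * yv ^ (2 * m)

noncomputable def cD (m : ℕ) : K2 :=
  ∑ w ∈ dyckFinset m, pv ^ (area m w + retCount m w) * yv ^ (2 * m - retCount m w)

lemma dyckFinset_zero : dyckFinset 0 = {(fun _ => true : Fin (2*0) → Bool)} := by
  ext w
  simp only [dyckFinset, Finset.mem_filter, Finset.mem_univ, true_and,
    Finset.mem_singleton]
  constructor
  · intro _
    funext j
    exact absurd j.isLt (by omega)
  · intro h
    constructor
    · rw [show (Finset.univ : Finset (Fin (2*0))) = ∅ from rfl]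
      simp
    · intro l _
      apply Finset.card_le_card
      rw [show (Finset.univ : Finset (Fin (2*0))) = ∅ from rfl]
      simp

lemma area_zero (w : Fin (2*0) → Bool) : area 0 w = 0 := by
  unfold area
  simp

lemma retCount_zero (w : Fin (2*0) → Bool) : retCount 0 w = 0 := by
  unfold retCount
  simp

lemma gD_zero (k : ℕ) : gD k 0 = 1 := by
  unfold gD
  rw [dyckFinset_zero, Finset.sum_singleton, area_zero]
  simp

lemma cD_zero : cD 0 = 1 := by
  unfold cD
  rw [dyckFinset_zero, Finset.sum_singleton, area_zero, retCount_zero]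
  simp

lemma gD_rec (k m : ℕ) : gD k (m+1)
    = ∑ a ∈ Finset.range (m+1), pv^k * yv^2 * gD (k+1) a * gD k (m-a) := by
  refine Eq.trans (decomp m (fun x y => pv ^ (x + k * (m+1)) * yv ^ (2 * (m+1)))) ?_
  rw [Finset.sum_sigma]
  apply Finset.sum_congr rfl
  intro a ha
  rw [Finset.mem_range] at ha
  rw [Finset.sum_product]
  have hrhs : pv^k * yv^2 * gD (k+1) a * gD k (m-a)
      = ∑ w₁ ∈ dyckFinset a, ∑ w₂ ∈ dyckFinset (m-a),
          pv^k * yv^2 * (pv ^ (area a w₁ + (k+1) * a) * yv ^ (2 * a))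
            * (pv ^ (area (m-a) w₂ + k * (m-a)) * yv ^ (2 * (m-a))) := by
    unfold gD
    rw [mul_assoc, Finset.sum_mul_sum, Finset.mul_sum]
    apply Finset.sum_congr rfl
    intro w₁ _
    rw [Finset.mul_sum]
    apply Finset.sum_congr rfl
    intro w₂ _
    ring
  rw [hrhs]
  apply Finset.sum_congr rfl
  intro w₁ _
  apply Finset.sum_congr rfl
  intro w₂ _
  simp only []
  have hexp : k + ((area a w₁ + (k+1) * a) + (area (m-a) w₂ + k * (m-a)))
      = (area a w₁ + a + area (m-a) w₂) + k * (m+1) := by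
    have h : 1 + a + (m - a) = m + 1 := by omega
    calc k + ((area a w₁ + (k+1) * a) + (area (m-a) w₂ + k * (m-a)))
        = (area a w₁ + a + area (m-a) w₂) + k * (1 + a + (m-a)) := by ring
      _ = _ := by rw [h]
  have hyexp : 2 + (2*a + 2*(m-a)) = 2*(m+1) := by omega
  rw [← hexp, ← hyexp, pow_add, pow_add, pow_add, pow_add]
  ring

lemma cD_rec (m : ℕ) : cD (m+1)
    = ∑ a ∈ Finset.range (m+1), pv * yv * gD 1 a * cD (m-a) := by
  refine Eq.trans (decomp m (fun x y => pv ^ (x + y) * yv ^ (2 * (m+1) - y))) ?_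
  rw [Finset.sum_sigma]
  apply Finset.sum_congr rfl
  intro a ha
  rw [Finset.mem_range] at ha
  rw [Finset.sum_product]
  have hrhs : pv * yv * gD 1 a * cD (m-a)
      = ∑ w₁ ∈ dyckFinset a, ∑ w₂ ∈ dyckFinset (m-a),
          pv * yv * (pv ^ (area a w₁ + 1 * a) * yv ^ (2 * a))
            * (pv ^ (area (m-a) w₂ + retCount (m-a) w₂)
                * yv ^ (2 * (m-a) - retCount (m-a) w₂)) := by
    unfold gD cD
    rw [mul_assoc, Finset.sum_mul_sum, Finset.mul_sum]
    apply Finset.sum_congr rfl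
    intro w₁ _
    rw [Finset.mul_sum]
    apply Finset.sum_congr rfl
    intro w₂ _
    ring
  rw [hrhs]
  apply Finset.sum_congr rfl
  intro w₁ _
  apply Finset.sum_congr rfl
  intro w₂ _
  simp only []
  have hret := retCount_le (m-a) w₂
  have hexp : 1 + ((area a w₁ + 1 * a) + (area (m-a) w₂ + retCount (m-a) w₂))
      = (area a w₁ + a + area (m-a) w₂) + (retCount (m-a) w₂ + 1) := by ring
  have hyexp : 1 + (2*a + (2*(m-a) - retCount (m-a) w₂))
      = 2*(m+1) - (retCount (m-a) w₂ + 1) := by omega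
  rw [← hexp, ← hyexp, pow_add, pow_add, pow_add, pow_add]
  ring


/-! ### Power series layer -/

open PowerSeries

noncomputable def Gser (k : ℕ) : PowerSeries K2 := PowerSeries.mk (gD k)

noncomputable def CserD : PowerSeries K2 := PowerSeries.mk cD

noncomputable def Ak (k : ℕ) : PowerSeries K2 :=
  PowerSeries.mk (fun n => pv ^ (k * n) * aa n)

lemma coeff_Aser (n : ℕ) : (PowerSeries.coeff (R := K2) n) Aser = aa n := by
  unfold Aser aa
  rw [PowerSeries.coeff_mk]

lemma Aser_eq_Ak : Aser = Ak 0 := by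
  ext n
  rw [coeff_Aser]
  unfold Ak
  rw [PowerSeries.coeff_mk]
  simp

lemma rescale_Aser : PowerSeries.rescale pv Aser = Ak 1 := by
  ext n
  rw [PowerSeries.coeff_rescale, coeff_Aser]
  unfold Ak
  rw [PowerSeries.coeff_mk, one_mul]

lemma Gser_eq (k : ℕ) : Gser k
    = 1 + PowerSeries.C (R := K2) (pv^k * yv^2) * PowerSeries.X * (Gser (k+1) * Gser k) := by
  ext n
  cases n with
  | zero =>
    simp only [PowerSeries.coeff_zero_eq_constantCoeff, map_add, map_mul,
      PowerSeries.constantCoeff_X, mul_zero, zero_mul, map_one, add_zero]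
    unfold Gser
    rw [PowerSeries.constantCoeff_mk, gD_zero]
  | succ n =>
    rw [map_add, mul_assoc, PowerSeries.coeff_C_mul, PowerSeries.coeff_succ_X_mul]
    have h1 : (PowerSeries.coeff (R := K2) (n+1)) 1 = 0 := by
      rw [PowerSeries.coeff_one]
      simp
    rw [h1, zero_add, PowerSeries.coeff_mul]
    unfold Gser
    rw [PowerSeries.coeff_mk, gD_rec]
    rw [Finset.Nat.sum_antidiagonal_eq_sum_range_succ_mk, Finset.mul_sum]
    apply Finset.sum_congr rfl
    intro a _
    rw [PowerSeries.coeff_mk, PowerSeries.coeff_mk]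
    ring

lemma CserD_eq : CserD
    = 1 + PowerSeries.C (R := K2) (pv * yv) * PowerSeries.X * (Gser 1 * CserD) := by
  ext n
  cases n with
  | zero =>
    simp only [PowerSeries.coeff_zero_eq_constantCoeff, map_add, map_mul,
      PowerSeries.constantCoeff_X, mul_zero, zero_mul, map_one, add_zero]
    unfold CserD
    rw [PowerSeries.constantCoeff_mk, cD_zero]
  | succ n =>
    rw [map_add, mul_assoc, PowerSeries.coeff_C_mul, PowerSeries.coeff_succ_X_mul]
    have h1 : (PowerSeries.coeff (R := K2) (n+1)) 1 = 0 := by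
      rw [PowerSeries.coeff_one]
      simp
    rw [h1, zero_add, PowerSeries.coeff_mul]
    unfold CserD Gser
    rw [PowerSeries.coeff_mk, cD_rec]
    rw [Finset.Nat.sum_antidiagonal_eq_sum_range_succ_mk, Finset.mul_sum]
    apply Finset.sum_congr rfl
    intro a _
    rw [PowerSeries.coeff_mk, PowerSeries.coeff_mk]
    ring

lemma Ak_rec (k : ℕ) : Ak k
    = Ak (k+1) - PowerSeries.C (R := K2) (pv^(k+1) * yv^2) * PowerSeries.X * Ak (k+2) := by
  ext n
  cases n with
  | zero =>
    rw [map_sub, mul_assoc, PowerSeries.coeff_C_mul, PowerSeries.coeff_zero_X_mul]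
    unfold Ak
    rw [PowerSeries.coeff_mk, PowerSeries.coeff_mk]
    simp
  | succ n =>
    rw [map_sub, mul_assoc, PowerSeries.coeff_C_mul, PowerSeries.coeff_succ_X_mul]
    unfold Ak
    rw [PowerSeries.coeff_mk, PowerSeries.coeff_mk, PowerSeries.coeff_mk]
    have h := aa_rec n
    rw [show (k+1)*(n+1) = k*(n+1) + (n+1) by ring, pow_add]
    have hpow : pv^(k+1) * pv^((k+2)*n) = pv^(k*(n+1)) * pv^(2*n+1) := by
      rw [← pow_add, ← pow_add, show (k+1) + (k+2)*n = k*(n+1) + (2*n+1) by ring]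
    linear_combination pv^(k*(n+1)) * h + (yv^2 * aa n) * hpow

lemma T_coeff : ∀ n k, (PowerSeries.coeff (R := K2) n) (Ak k * Gser (k+1))
    = (PowerSeries.coeff (R := K2) n) (Ak (k+1)) := by
  intro n
  induction n using Nat.strong_induction_on with
  | _ n IH =>
    intro k
    have key : Ak k * Gser (k+1) - Ak (k+1)
        = PowerSeries.C (R := K2) (pv^(k+1) * yv^2) * PowerSeries.X *
            (Gser (k+2) * (Ak k * Gser (k+1) - Ak (k+1))
              + (Ak (k+1) * Gser (k+2) - Ak (k+2))) := by
      have hG := Gser_eq (k+1)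
      have hA := Ak_rec k
      linear_combination (Ak k) * hG + hA
    cases n with
    | zero =>
      simp only [PowerSeries.coeff_zero_eq_constantCoeff, map_mul]
      unfold Ak Gser
      rw [PowerSeries.constantCoeff_mk, PowerSeries.constantCoeff_mk,
        PowerSeries.constantCoeff_mk, gD_zero, aa_zero]
      simp
    | succ n =>
      have hk := congrArg (PowerSeries.coeff (R := K2) (n+1)) key
      rw [map_sub, mul_assoc, PowerSeries.coeff_C_mul,
        PowerSeries.coeff_succ_X_mul, map_add, map_sub] at hk
      have hz1 : (PowerSeries.coeff (R := K2) n) (Ak (k+1) * Gser (k+2))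
          - (PowerSeries.coeff (R := K2) n) (Ak (k+2)) = 0 := by
        rw [IH n (by omega) (k+1)]
        ring
      have hz2 : (PowerSeries.coeff (R := K2) n) (Gser (k+2) * (Ak k * Gser (k+1) - Ak (k+1)))
          = 0 := by
        rw [PowerSeries.coeff_mul]
        apply Finset.sum_eq_zero
        intro p hp
        rw [Finset.HasAntidiagonal.mem_antidiagonal] at hp
        rw [map_sub]
        have : (PowerSeries.coeff (R := K2) p.2) (Ak k * Gser (k+1))
            - (PowerSeries.coeff (R := K2) p.2) (Ak (k+1)) = 0 := by
          rw [IH p.2 (by omega) k]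
          ring
        rw [this, mul_zero]
      rw [hz1, hz2, zero_add, mul_zero] at hk
      exact sub_eq_zero.1 hk


noncomputable def Phi : PowerSeries K2 :=
  PowerSeries.mk (fun n => (pv * yv) ^ n * Dcoeff n)

lemma Dcoeff_eq (n : ℕ) : (pv*yv) * ((pv*yv)^n * Dcoeff n) = cD (n+1) := by
  have hset : (Finset.univ.filter (fun w : Fin (2*(n+1)) → Bool => isDyck (n+1) w))
      = dyckFinset (n+1) := rfl
  unfold Dcoeff cD
  rw [hset, Finset.mul_sum, Finset.mul_sum]
  apply Finset.sum_congr rfl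
  intro w hw
  have hret := retCount_le (n+1) w
  set A := area (n+1) w with hA
  set r := retCount (n+1) w with hr
  have hzp : pv ^ (((r:ℤ) + (A:ℤ)) - ((n:ℤ)+1)) * pv ^ (((n+1 : ℕ)) : ℤ)
      = pv ^ ((A + r : ℕ) : ℤ) := by
    rw [← zpow_add₀ pv_ne_zero]
    congr 1
    push_cast
    ring
  have hzy : yv ^ (((n:ℤ)+1) - (r:ℤ)) * yv ^ (((n+1 : ℕ)) : ℤ)
      = yv ^ ((2*(n+1) - r : ℕ) : ℤ) := by
    rw [← zpow_add₀ yv_ne_zero]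
    congr 1
    omega
  calc pv * yv * ((pv*yv)^n * (pv ^ (((r:ℤ) + (A:ℤ)) - ((n:ℤ)+1)) * yv ^ (((n:ℤ)+1) - (r:ℤ))))
      = (pv ^ (((r:ℤ) + (A:ℤ)) - ((n:ℤ)+1)) * pv ^ (((n+1 : ℕ)) : ℤ))
        * (yv ^ (((n:ℤ)+1) - (r:ℤ)) * yv ^ (((n+1 : ℕ)) : ℤ)) := by
        rw [zpow_natCast, zpow_natCast, mul_pow, pow_succ, pow_succ]
        ring
    _ = pv ^ ((A + r : ℕ) : ℤ) * yv ^ ((2*(n+1) - r : ℕ) : ℤ) := by rw [hzp, hzy]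
    _ = pv ^ (A + r) * yv ^ (2*(n+1) - r) := by rw [zpow_natCast, zpow_natCast]

lemma Phi_eq : Phi = Gser 1 * CserD := by
  have hCne : (PowerSeries.C (R := K2)) (pv*yv) ≠ 0 := by
    intro h
    have h2 := congrArg (PowerSeries.constantCoeff (R := K2)) h
    rw [PowerSeries.constantCoeff_C, map_zero] at h2
    exact mul_ne_zero pv_ne_zero yv_ne_zero h2
  have hXne : (PowerSeries.C (R := K2) (pv*yv) * PowerSeries.X) ≠ 0 :=
    mul_ne_zero hCne PowerSeries.X_ne_zero
  apply mul_left_cancel₀ hXne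
  ext nn
  cases nn with
  | zero =>
    simp only [PowerSeries.coeff_zero_eq_constantCoeff, map_mul,
      PowerSeries.constantCoeff_X, mul_zero, zero_mul]
  | succ n =>
    rw [mul_assoc, mul_assoc, PowerSeries.coeff_C_mul, PowerSeries.coeff_C_mul,
      PowerSeries.coeff_succ_X_mul, PowerSeries.coeff_succ_X_mul]
    unfold Phi
    rw [PowerSeries.coeff_mk, Dcoeff_eq, PowerSeries.coeff_mul]
    rw [Finset.Nat.sum_antidiagonal_eq_sum_range_succ_mk, Finset.mul_sum, cD_rec]
    apply Finset.sum_congr rfl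
    intro a _
    unfold Gser CserD
    rw [PowerSeries.coeff_mk, PowerSeries.coeff_mk]
    ring

/-- `B(x) · Σ_{n≥0} (p·y)^n (Σ_{μ ∈ D_{n+1}} p^{D(μ)} y^{n+1-ret(μ)}) x^n
= A(p·x)` where `D(μ) = ret(μ) + Area(μ) - (n+1)`. -/
theorem stmt_13 :
    Bser * PowerSeries.mk (fun n => (pv * yv) ^ n * Dcoeff n) =
      PowerSeries.rescale pv Aser := by
  have hPhi : PowerSeries.mk (fun n => (pv * yv) ^ n * Dcoeff n) = Phi := rfl
  unfold Bser
  rw [rescale_Aser, hPhi]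
  have hT : ∀ k, Ak k * Gser (k+1) = Ak (k+1) := by
    intro k
    ext n
    exact T_coeff n k
  have E1 : Aser * Gser 1 = Ak 1 := by rw [Aser_eq_Ak]; exact hT 0
  have E2 := CserD_eq
  have E3 := Phi_eq
  linear_combination CserD * E1 + (Ak 1) * E2
    + (Aser - PowerSeries.C (R := K2) (pv*yv) * PowerSeries.X * Ak 1) * E3
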